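/- Let W be a finite group acting orthogonally on a Euclidean space, ε: W → {±1} a homomorphism with ε(w₀) = −1 for some w₀ ∈ W, and let f: W → ℂ satisfy f(w₀w) = f(w) for all w. Let β, β', α be vectors with (β∨|β') ≠ 2 and w₀⁻¹β∨ = β∨ − (β∨|β')β'∨. If S_β := Σ_{w∈W} ε(w)(β∨|wα) f(w) and S_{β'} := Σ_{w∈W} ε(w)(β'∨|wα) f(w) satisfy S_β = S_{β'} (both equal 4A), then A = 0, i.e., Σ_{w∈W} ε(w)(β∨|wα) f(w) = 0. -/
import Mathlib


open RealInnerProductSpace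

/-- Abstraction of the vanishing argument: if ε(w₀) = −1, f(w₀w) = f(w),
w₀⁻¹β∨ = β∨ − (β∨|β')β'∨, (β∨|β') ≠ 2, and the alternating sums formed with β∨
and with β'∨ are both equal to 4A, then A = 0 and the sum vanishes. -/
theorem stmt4 {V : Type*} [NormedAddCommGroup V] [InnerProductSpace ℝ V]
    {W : Type*} [Fintype W] [Group W]
    (ρ : W →* (V ≃ₗᵢ[ℝ] V))
    (ε : W → ℂ) (hε : ∀ u v : W, ε (u * v) = ε u * ε v)
    (hεpm : ∀ w : W, ε w = 1 ∨ ε w = -1)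
    (w₀ : W) (hw₀ : ε w₀ = -1)
    (f : W → ℂ) (hf : ∀ w : W, f (w₀ * w) = f w)
    (βv β'v β' α : V)
    (hpair : ⟪βv, β'⟫ ≠ 2)
    (hrefl : (ρ w₀).symm βv = βv - ⟪βv, β'⟫ • β'v)
    (A : ℂ)
    (hA : ∑ w : W, ε w * (⟪βv, (ρ w) α⟫ : ℂ) * f w = 4 * A)
    (hA' : ∑ w : W, ε w * (⟪β'v, (ρ w) α⟫ : ℂ) * f w = 4 * A) :
    A = 0 ∧ ∑ w : W, ε w * (⟪βv, (ρ w) α⟫ : ℂ) * f w = 0 := by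
  set c : ℝ := ⟪βv, β'⟫ with hc
  have hinner : ∀ w : W, (⟪βv, ρ (w₀ * w) α⟫ : ℝ)
      = ⟪βv, ρ w α⟫ - c * ⟪β'v, ρ w α⟫ := by
    intro w
    have h1 : ρ (w₀ * w) α = ρ w₀ (ρ w α) := by simp [map_mul]
    have h2 : (⟪βv, ρ w₀ (ρ w α)⟫ : ℝ) = ⟪(ρ w₀).symm βv, ρ w α⟫ := by
      conv_lhs => rw [← (ρ w₀).apply_symm_apply βv]
      rw [(ρ w₀).inner_map_map]
    rw [h1, h2, hrefl, inner_sub_left, real_inner_smul_left]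
  have key : ∑ w : W, ε (w₀ * w) * (⟪βv, ρ (w₀ * w) α⟫ : ℂ) * f (w₀ * w)
      = ∑ w : W, ε w * (⟪βv, ρ w α⟫ : ℂ) * f w :=
    Fintype.sum_equiv (Equiv.mulLeft w₀) _ _ (fun w => rfl)
  have expand : ∑ w : W, ε (w₀ * w) * (⟪βv, ρ (w₀ * w) α⟫ : ℂ) * f (w₀ * w)
      = -(4 * A) + (c : ℂ) * (4 * A) := by
    have : ∀ w : W, ε (w₀ * w) * (⟪βv, ρ (w₀ * w) α⟫ : ℂ) * f (w₀ * w)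
        = -(ε w * (⟪βv, ρ w α⟫ : ℂ) * f w)
          + (c : ℂ) * (ε w * (⟪β'v, ρ w α⟫ : ℂ) * f w) := by
      intro w
      rw [hε, hw₀, hf, hinner w]
      push_cast
      ring
    rw [Finset.sum_congr rfl (fun w _ => this w), Finset.sum_add_distrib,
      ← Finset.mul_sum, Finset.sum_neg_distrib, hA, hA']
  have h4 : ∑ w : W, ε w * (⟪βv, ρ w α⟫ : ℂ) * f w = -(4 * A) + (c : ℂ) * (4 * A) := by
    rw [← key, expand]
  rw [hA] at h4
  have hfac : (2 - (c : ℂ)) * (4 * A) = 0 := by linear_combination h4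
  have hc2 : (2 - (c : ℂ)) ≠ 0 := by
    intro h
    apply hpair
    have : (c : ℂ) = 2 := by linear_combination -h
    exact_mod_cast this
  have hA0 : A = 0 := by
    rcases mul_eq_zero.mp hfac with h | h
    · exact absurd h hc2
    · have := mul_eq_zero.mp h
      rcases this with h' | h'
      · norm_num at h'
      · exact h'
  exact ⟨hA0, by rw [hA, hA0, mul_zero]⟩
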